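/- arXiv:1206.1964 — 2 statements merged into one kernel-verified Lean document; each statement's English description precedes it below -/
import Mathlib

section
/- Let the additive group ℝⁿ act by isometries on a metric space X, and assume the action is continuous in the group variable, i.e. for every x ∈ X the map a ↦ a·x from ℝⁿ to X is continuous. Then for every λ ∈ ℝ and every a ∈ ℝⁿ the stable translation lengths satisfy |λ·a| = |λ|·|a|. -/
open Filter Topology

section Aux

variable {n : ℕ} {X : Type*} [MetricSpace X]
  [AddAction (EuclideanSpace ℝ (Fin n)) X]

private noncomputable def stlL (x : X) (b : EuclideanSpace ℝ (Fin n)) : ℝ :=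
  sInf ((fun m : ℕ => dist ((m • b) +ᵥ x) x / m) '' Set.Ici 1)

private lemma stl_subadd
    (hiso : ∀ a : EuclideanSpace ℝ (Fin n), Isometry (fun x : X => a +ᵥ x))
    (x : X) (b : EuclideanSpace ℝ (Fin n)) :
    Subadditive (fun m : ℕ => dist ((m • b) +ᵥ x) x) := by
  intro m k
  have h1 : ((m + k) • b) +ᵥ x = (k • b) +ᵥ ((m • b) +ᵥ x) := by
    rw [vadd_vadd, add_nsmul, add_comm]
  calc dist (((m + k) • b) +ᵥ x) x
      ≤ dist (((m + k) • b) +ᵥ x) ((k • b) +ᵥ x) + dist ((k • b) +ᵥ x) x :=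
        dist_triangle _ _ _
    _ = dist ((m • b) +ᵥ x) x + dist ((k • b) +ᵥ x) x := by
        rw [h1, (hiso (k • b)).dist_eq ((m • b) +ᵥ x) x]

private lemma stl_tendsto
    (hiso : ∀ a : EuclideanSpace ℝ (Fin n), Isometry (fun x : X => a +ᵥ x))
    (x : X) (b : EuclideanSpace ℝ (Fin n)) :
    Tendsto (fun m : ℕ => dist ((m • b) +ᵥ x) x / m) atTop (𝓝 (stlL x b)) := by
  have h := stl_subadd hiso x b
  have hb : BddBelow (Set.range fun m : ℕ => dist ((m • b) +ᵥ x) x / m) := by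
    refine ⟨0, ?_⟩
    rintro _ ⟨m, rfl⟩
    positivity
  have := h.tendsto_lim hb
  unfold Subadditive.lim at this
  exact this

private lemma stl_zero
    (hiso : ∀ a : EuclideanSpace ℝ (Fin n), Isometry (fun x : X => a +ᵥ x))
    (x : X) : stlL x (0 : EuclideanSpace ℝ (Fin n)) = 0 := by
  have h0 : Tendsto (fun m : ℕ => dist ((m • (0 : EuclideanSpace ℝ (Fin n))) +ᵥ x) x / m)
      atTop (𝓝 0) := by
    have : (fun m : ℕ => dist ((m • (0 : EuclideanSpace ℝ (Fin n))) +ᵥ x) x / m)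
        = fun _ => (0 : ℝ) := by
      funext m; simp
    rw [this]; exact tendsto_const_nhds
  exact tendsto_nhds_unique (stl_tendsto hiso x 0) h0

private lemma stl_nsmul
    (hiso : ∀ a : EuclideanSpace ℝ (Fin n), Isometry (fun x : X => a +ᵥ x))
    (x : X) (b : EuclideanSpace ℝ (Fin n)) (k : ℕ) :
    stlL x (k • b) = k * stlL x b := by
  rcases Nat.eq_zero_or_pos k with rfl | hk
  · simp [stl_zero hiso x]
  · have hmk : Tendsto (fun m : ℕ => m * k) atTop atTop :=
      tendsto_atTop_mono (fun m => Nat.le_mul_of_pos_right m hk) tendsto_id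
    have A : Tendsto (fun m : ℕ => dist (((m * k) • b) +ᵥ x) x / (↑(m * k)))
        atTop (𝓝 (stlL x b)) := (stl_tendsto hiso x b).comp hmk
    have B : Tendsto (fun m : ℕ => (k : ℝ) * (dist (((m * k) • b) +ᵥ x) x / (↑(m * k))))
        atTop (𝓝 ((k : ℝ) * stlL x b)) := A.const_mul _
    have C : Tendsto (fun m : ℕ => dist ((m • (k • b)) +ᵥ x) x / m)
        atTop (𝓝 ((k : ℝ) * stlL x b)) := by
      refine B.congr' ?_
      filter_upwards [eventually_ge_atTop 1] with m hm
      have h1 : m • (k • b) = (m * k) • b := (by rw [mul_comm]; exact (mul_nsmul b k m).symm)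
      have hm0 : (m : ℝ) ≠ 0 := Nat.cast_ne_zero.2 (by omega)
      have hk0 : (k : ℝ) ≠ 0 := Nat.cast_ne_zero.2 (by omega)
      rw [h1, Nat.cast_mul]
      field_simp
    exact tendsto_nhds_unique (stl_tendsto hiso x (k • b)) C

private lemma stl_dist_neg
    (hiso : ∀ a : EuclideanSpace ℝ (Fin n), Isometry (fun x : X => a +ᵥ x))
    (x : X) (v : EuclideanSpace ℝ (Fin n)) :
    dist ((-v) +ᵥ x) x = dist (v +ᵥ x) x := by
  have h := (hiso v).dist_eq ((-v) +ᵥ x) x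
  simp only [vadd_vadd, add_neg_cancel, zero_vadd] at h
  rw [← h, dist_comm]

private lemma stl_neg
    (hiso : ∀ a : EuclideanSpace ℝ (Fin n), Isometry (fun x : X => a +ᵥ x))
    (x : X) (b : EuclideanSpace ℝ (Fin n)) :
    stlL x (-b) = stlL x b := by
  have h : Tendsto (fun m : ℕ => dist ((m • (-b)) +ᵥ x) x / m) atTop (𝓝 (stlL x b)) := by
    refine (stl_tendsto hiso x b).congr fun m => ?_
    rw [← stl_dist_neg hiso x (m • b), neg_nsmul]
  exact tendsto_nhds_unique (stl_tendsto hiso x (-b)) h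

private lemma stl_le
    (hiso : ∀ a : EuclideanSpace ℝ (Fin n), Isometry (fun x : X => a +ᵥ x))
    (x : X) (b c : EuclideanSpace ℝ (Fin n)) :
    stlL x b ≤ stlL x c + dist ((b - c) +ᵥ x) x := by
  have key : ∀ᶠ m : ℕ in atTop,
      dist ((m • b) +ᵥ x) x / m ≤ dist ((m • c) +ᵥ x) x / m + dist ((b - c) +ᵥ x) x := by
    filter_upwards [eventually_ge_atTop 1] with m hm
    have hm0 : (0 : ℝ) < m := by exact_mod_cast hm
    have hb : m • b = m • c + m • (b - c) := by
      rw [← nsmul_add]; congr 1; abel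
    have h1 : dist ((m • b) +ᵥ x) ((m • c) +ᵥ x) = dist ((m • (b - c)) +ᵥ x) x := by
      have h2 : (m • b) +ᵥ x = (m • c) +ᵥ ((m • (b - c)) +ᵥ x) := by
        rw [vadd_vadd, ← hb]
      rw [h2, (hiso (m • c)).dist_eq]
    have h3 : dist ((m • (b - c)) +ᵥ x) x ≤ m * dist ((b - c) +ᵥ x) x := by
      have h4 := (stl_subadd hiso x (b - c)).apply_mul_add_le m 1 0
      simpa using h4
    have h5 : dist ((m • b) +ᵥ x) x ≤ dist ((m • c) +ᵥ x) x + m * dist ((b - c) +ᵥ x) x :=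
      calc dist ((m • b) +ᵥ x) x
          ≤ dist ((m • b) +ᵥ x) ((m • c) +ᵥ x) + dist ((m • c) +ᵥ x) x := dist_triangle _ _ _
        _ ≤ dist ((m • c) +ᵥ x) x + m * dist ((b - c) +ᵥ x) x := by rw [h1]; linarith
    rw [div_add' _ _ _ hm0.ne', div_le_div_iff_of_pos_right hm0]
    linarith
  exact le_of_tendsto_of_tendsto (stl_tendsto hiso x b)
    ((stl_tendsto hiso x c).add_const _) key

end Aux

/-- If the additive group `ℝⁿ` acts by isometries on a metric space `X`,
continuously in the group variable, then the stable translation length is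
absolutely homogeneous: `|λ • a| = |λ| * |a|`. -/
theorem stable_translation_length_smul
    {n : ℕ} {X : Type*} [MetricSpace X]
    [AddAction (EuclideanSpace ℝ (Fin n)) X]
    (hiso : ∀ a : EuclideanSpace ℝ (Fin n), Isometry (fun x : X => a +ᵥ x))
    (hcont : ∀ x : X, Continuous (fun a : EuclideanSpace ℝ (Fin n) => a +ᵥ x))
    (lam : ℝ) (a : EuclideanSpace ℝ (Fin n)) (x : X) (ℓ ℓ' : ℝ)
    (hℓ : Tendsto (fun m : ℕ => dist ((m • a) +ᵥ x) x / m) atTop (𝓝 ℓ))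
    (hℓ' : Tendsto (fun m : ℕ => dist ((m • (lam • a)) +ᵥ x) x / m) atTop (𝓝 ℓ')) :
    ℓ' = |lam| * ℓ := by
  have hla : ℓ = stlL x a := tendsto_nhds_unique hℓ (stl_tendsto hiso x a)
  have hla' : ℓ' = stlL x (lam • a) := tendsto_nhds_unique hℓ' (stl_tendsto hiso x (lam • a))
  -- homogeneity for nonnegative rationals
  have hrat : ∀ q : ℚ, 0 ≤ q → stlL x ((q : ℝ) • a) = q * stlL x a := by
    intro q hq
    have hden : (0 : ℝ) < (q.den : ℝ) := by exact_mod_cast q.pos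
    have hnum : ((q.num.toNat : ℝ)) = (q.den : ℝ) * (q : ℝ) := by
      have h1 : (q : ℝ) * (q.den : ℝ) = (q.num : ℝ) := by
        rw [Rat.cast_def]
        field_simp
      have h2 : ((q.num.toNat : ℝ)) = (q.num : ℝ) := by
        exact_mod_cast congrArg (Int.cast : ℤ → ℝ) (Int.toNat_of_nonneg (Rat.num_nonneg.2 hq))
      rw [h2]; linarith
    have key : q.den • ((q : ℝ) • a) = q.num.toNat • a := by
      rw [← Nat.cast_smul_eq_nsmul ℝ q.den, ← Nat.cast_smul_eq_nsmul ℝ q.num.toNat,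
        smul_smul, hnum]
    have h3 : (q.den : ℝ) * stlL x ((q : ℝ) • a) = (q.num.toNat : ℝ) * stlL x a := by
      rw [← stl_nsmul hiso x ((q : ℝ) • a) q.den, key, stl_nsmul hiso x a]
    have := h3
    rw [hnum] at this
    have h4 : stlL x ((q : ℝ) • a) = (q : ℝ) * stlL x a := by
      have := mul_left_cancel₀ hden.ne' (by linarith [this] : (q.den : ℝ) * stlL x ((q:ℝ) • a) = (q.den : ℝ) * ((q : ℝ) * stlL x a))
      exact this
    exact h4
  -- homogeneity for nonnegative reals
  have hreal : ∀ t : ℝ, 0 ≤ t → stlL x (t • a) = t * stlL x a := by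
    intro t ht
    refine eq_of_forall_dist_le fun ε hε => ?_
    -- continuity of s ↦ dist ((s • a) +ᵥ x) x at 0
    have gcont : Continuous fun s : ℝ => dist ((s • a) +ᵥ x) x :=
      ((hcont x).comp (continuous_id.smul continuous_const)).dist continuous_const
    have g0 : dist (((0 : ℝ) • a) +ᵥ x) x = 0 := by simp
    have hev : ∀ᶠ s : ℝ in 𝓝 0, dist ((s • a) +ᵥ x) x < ε / 2 := by
      have := gcont.continuousAt (x := (0 : ℝ))
      rw [ContinuousAt, g0] at this
      exact this.eventually (gt_mem_nhds (by linarith))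
    rw [Metric.eventually_nhds_iff] at hev
    obtain ⟨δ, hδ, hδ'⟩ := hev
    set M : ℝ := |stlL x a| + 1 with hM
    have hM0 : 0 < M := by positivity
    set δ' : ℝ := min δ (ε / (2 * M)) with hδ'def
    have hδ'0 : 0 < δ' := lt_min hδ (by positivity)
    obtain ⟨q, hq1, hq2⟩ := exists_rat_btwn (lt_add_of_pos_right t hδ'0)
    have hq0 : (0 : ℚ) ≤ q := by exact_mod_cast le_of_lt (lt_of_le_of_lt ht hq1)
    have hqt : |(q : ℝ) - t| < δ' := by
      rw [abs_of_nonneg (by linarith)]; linarith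
    -- Lipschitz bounds
    have hb1 : stlL x (t • a) ≤ stlL x ((q : ℝ) • a) + dist (((t - (q : ℝ)) • a) +ᵥ x) x := by
      have := stl_le hiso x (t • a) ((q : ℝ) • a)
      rwa [← sub_smul] at this
    have hb2 : stlL x ((q : ℝ) • a) ≤ stlL x (t • a) + dist ((((q : ℝ) - t) • a) +ᵥ x) x := by
      have := stl_le hiso x ((q : ℝ) • a) (t • a)
      rwa [← sub_smul] at this
    have hd1 : dist ((t - (q : ℝ)) : ℝ) 0 < δ := by
      rw [Real.dist_eq, sub_zero, abs_sub_comm]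
      exact lt_of_lt_of_le hqt (min_le_left _ _)
    have hd2 : dist (((q : ℝ) - t) : ℝ) 0 < δ := by
      rw [Real.dist_eq, sub_zero]
      exact lt_of_lt_of_le hqt (min_le_left _ _)
    have hg1 := hδ' hd1
    have hg2 := hδ' hd2
    have habs : |stlL x (t • a) - (q : ℝ) * stlL x a| ≤ ε / 2 := by
      rw [← hrat q hq0, abs_sub_le_iff]
      constructor <;> linarith
    have habs2 : |((q : ℝ) - t) * stlL x a| ≤ ε / 2 := by
      rw [abs_mul]
      have h1 : |(q : ℝ) - t| ≤ ε / (2 * M) :=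
        le_of_lt (lt_of_lt_of_le hqt (min_le_right _ _))
      have h2 : |stlL x a| ≤ M := by rw [hM]; linarith
      calc |(q : ℝ) - t| * |stlL x a| ≤ (ε / (2 * M)) * M :=
            mul_le_mul h1 h2 (abs_nonneg _) (by positivity)
        _ = ε / 2 := by field_simp
    rw [Real.dist_eq]
    have : stlL x (t • a) - t * stlL x a
        = (stlL x (t • a) - (q : ℝ) * stlL x a) + ((q : ℝ) - t) * stlL x a := by ring
    rw [this]
    calc |(stlL x (t • a) - (q : ℝ) * stlL x a) + ((q : ℝ) - t) * stlL x a|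
        ≤ |stlL x (t • a) - (q : ℝ) * stlL x a| + |((q : ℝ) - t) * stlL x a| := abs_add_le _ _
      _ ≤ ε := by linarith
  rcases le_or_gt 0 lam with hlam | hlam
  · rw [hla', hla, hreal lam hlam, abs_of_nonneg hlam]
  · have h1 : lam • a = -((-lam) • a) := by rw [neg_smul, neg_neg]
    rw [hla', hla, h1, stl_neg hiso x, hreal (-lam) (by linarith), abs_of_neg hlam]
end

section
/- Let the additive group ℝⁿ act by isometries on a metric space X, and assume that for every x ∈ X the map a ↦ a·x from ℝⁿ to X is continuous. Then the function a ↦ |a| assigning to each a ∈ ℝⁿ its stable translation length is a seminorm on ℝⁿ (it is subadditive and satisfies |λ·a| = |λ|·|a| for all λ ∈ ℝ), and in particular the set N = {a ∈ ℝⁿ : |a| = 0} of neutral elements is an ℝ-linear subspace of ℝⁿ. -/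
open Filter Topology

/-- If the additive group `ℝⁿ` acts by isometries on a metric space `X`,
continuously in the group variable, then the stable translation length
`a ↦ |a|` is a seminorm on `ℝⁿ`; in particular the set of neutral elements
(those with `|a| = 0`) is an `ℝ`-linear subspace of `ℝⁿ`. -/
theorem stable_translation_length_seminorm
    {n : ℕ} {X : Type*} [MetricSpace X]
    [AddAction (EuclideanSpace ℝ (Fin n)) X]
    (hiso : ∀ a : EuclideanSpace ℝ (Fin n), Isometry (fun x : X => a +ᵥ x))
    (hcont : ∀ x : X, Continuous (fun a : EuclideanSpace ℝ (Fin n) => a +ᵥ x)) :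
    ∃ p : Seminorm ℝ (EuclideanSpace ℝ (Fin n)),
      (∀ (a : EuclideanSpace ℝ (Fin n)) (x : X),
          Tendsto (fun m : ℕ => dist ((m • a) +ᵥ x) x / m) atTop (𝓝 (p a))) ∧
        ∃ N : Submodule ℝ (EuclideanSpace ℝ (Fin n)),
          (N : Set (EuclideanSpace ℝ (Fin n))) =
            {a : EuclideanSpace ℝ (Fin n) | ∀ x : X,
              Tendsto (fun m : ℕ => dist ((m • a) +ᵥ x) x / m) atTop (𝓝 0)} := by
  set E := EuclideanSpace ℝ (Fin n) with hEdef
  by_cases hX : Nonempty X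
  · obtain ⟨x₀⟩ := hX
    -- subadditivity of the distance sequence
    have hsub : ∀ (a : E) (x : X), Subadditive (fun m : ℕ => dist ((m • a) +ᵥ x) x) := by
      intro a x m k
      have h1 : ((m + k) • a) +ᵥ x = (m • a) +ᵥ ((k • a) +ᵥ x) := by
        rw [add_smul, add_vadd]
      calc dist (((m + k) • a) +ᵥ x) x
          = dist ((m • a) +ᵥ ((k • a) +ᵥ x)) x := by rw [h1]
        _ ≤ dist ((m • a) +ᵥ ((k • a) +ᵥ x)) ((m • a) +ᵥ x) + dist ((m • a) +ᵥ x) x :=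
            dist_triangle _ _ _
        _ = dist ((m • a) +ᵥ x) x + dist ((k • a) +ᵥ x) x := by
            rw [(hiso (m • a)).dist_eq]; ring
    have hbdd : ∀ (a : E) (x : X),
        BddBelow (Set.range fun m : ℕ => dist ((m • a) +ᵥ x) x / m) := by
      intro a x
      refine ⟨0, ?_⟩
      rintro _ ⟨m, rfl⟩
      positivity
    set ℓ : E → ℝ := fun a => (hsub a x₀).lim with hℓdef
    have htend0 : ∀ a : E,
        Tendsto (fun m : ℕ => dist ((m • a) +ᵥ x₀) x₀ / m) atTop (𝓝 (ℓ a)) :=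
      fun a => (hsub a x₀).tendsto_lim (hbdd a x₀)
    -- independence of base point
    have htend : ∀ (a : E) (x : X),
        Tendsto (fun m : ℕ => dist ((m • a) +ᵥ x) x / m) atTop (𝓝 (ℓ a)) := by
      intro a x
      have hbound : ∀ (y z : X) (m : ℕ),
          dist ((m • a) +ᵥ y) y ≤ dist ((m • a) +ᵥ z) z + 2 * dist y z := by
        intro y z m
        calc dist ((m • a) +ᵥ y) y
            ≤ dist ((m • a) +ᵥ y) ((m • a) +ᵥ z) + dist ((m • a) +ᵥ z) z + dist z y :=
              dist_triangle4 _ _ _ _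
          _ = dist ((m • a) +ᵥ z) z + 2 * dist y z := by
              rw [(hiso (m • a)).dist_eq, dist_comm z y]; ring
      have hdiff : Tendsto
          (fun m : ℕ => (dist ((m • a) +ᵥ x) x - dist ((m • a) +ᵥ x₀) x₀) / m)
          atTop (𝓝 0) := by
        refine squeeze_zero_norm (fun m => ?_)
          (tendsto_const_div_atTop_nhds_zero_nat (2 * dist x x₀))
        rw [Real.norm_eq_abs, abs_div, Nat.abs_cast]
        have hnum : |dist ((m • a) +ᵥ x) x - dist ((m • a) +ᵥ x₀) x₀| ≤ 2 * dist x x₀ := by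
          rw [abs_sub_le_iff]
          constructor
          · linarith [hbound x x₀ m]
          · have h := hbound x₀ x m
            rw [dist_comm x₀ x] at h
            linarith
        exact div_le_div_of_nonneg_right hnum (Nat.cast_nonneg m)
      have h2 := hdiff.add (htend0 a)
      rw [zero_add] at h2
      refine h2.congr fun m => ?_
      rw [← add_div, sub_add_cancel]
    -- nonnegativity
    have hnonneg : ∀ a : E, 0 ≤ ℓ a := by
      intro a
      refine ge_of_tendsto' (htend0 a) fun m => ?_
      positivity
    -- zero
    have hzero : ℓ 0 = 0 := by
      refine tendsto_nhds_unique (htend0 0) ?_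
      have : ∀ m : ℕ, dist ((m • (0:E)) +ᵥ x₀) x₀ / m = 0 := by
        intro m; simp
      simpa [this] using tendsto_const_nhds (α := ℝ) (f := atTop (α := ℕ))
    -- subadditivity of ℓ
    have haddle : ∀ a b : E, ℓ (a + b) ≤ ℓ a + ℓ b := by
      intro a b
      refine le_of_tendsto_of_tendsto' (htend0 (a + b)) ((htend0 a).add (htend0 b)) fun m => ?_
      rw [← add_div]
      have hnum : dist ((m • (a + b)) +ᵥ x₀) x₀ ≤
          dist ((m • a) +ᵥ x₀) x₀ + dist ((m • b) +ᵥ x₀) x₀ := by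
        have e1 : (m • (a + b)) +ᵥ x₀ = (m • a) +ᵥ ((m • b) +ᵥ x₀) := by
          rw [smul_add, add_vadd]
        have e2 : (m • a) +ᵥ ((m • b) +ᵥ x₀) = (m • b) +ᵥ ((m • a) +ᵥ x₀) := by
          rw [← add_vadd, add_comm, add_vadd]
        calc dist ((m • (a + b)) +ᵥ x₀) x₀
            = dist ((m • a) +ᵥ ((m • b) +ᵥ x₀)) x₀ := by rw [e1]
          _ ≤ dist ((m • a) +ᵥ ((m • b) +ᵥ x₀)) ((m • b) +ᵥ x₀) + dist ((m • b) +ᵥ x₀) x₀ :=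
              dist_triangle _ _ _
          _ = dist ((m • b) +ᵥ ((m • a) +ᵥ x₀)) ((m • b) +ᵥ x₀) + dist ((m • b) +ᵥ x₀) x₀ := by
              rw [e2]
          _ = dist ((m • a) +ᵥ x₀) x₀ + dist ((m • b) +ᵥ x₀) x₀ := by
              rw [(hiso (m • b)).dist_eq]
      exact div_le_div_of_nonneg_right hnum (Nat.cast_nonneg m)
    -- ℓ (-a) = ℓ a
    have hneg : ∀ a : E, ℓ (-a) = ℓ a := by
      intro a
      have hseq : ∀ m : ℕ, dist ((m • a) +ᵥ x₀) x₀ = dist ((m • (-a)) +ᵥ x₀) x₀ := by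
        intro m
        have e1 : (m • a) +ᵥ ((m • (-a)) +ᵥ x₀) = x₀ := by
          rw [← add_vadd, smul_neg, add_neg_cancel, zero_vadd]
        calc dist ((m • a) +ᵥ x₀) x₀
            = dist x₀ ((m • a) +ᵥ x₀) := dist_comm _ _
          _ = dist ((m • a) +ᵥ ((m • (-a)) +ᵥ x₀)) ((m • a) +ᵥ x₀) := by rw [e1]
          _ = dist ((m • (-a)) +ᵥ x₀) x₀ := (hiso (m • a)).dist_eq _ _
      exact (tendsto_nhds_unique (htend0 (-a))
        ((htend0 a).congr fun m => by rw [hseq m])).symm ▸ rfl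
    -- a convenient upper bound
    have hle1 : ∀ a : E, ℓ a ≤ dist (a +ᵥ x₀) x₀ := by
      intro a
      have h := (hsub a x₀).lim_le_div (hbdd a x₀) (n := 1) one_ne_zero
      simpa using h
    -- natural homogeneity
    have hnat : ∀ (k : ℕ) (a : E), ℓ (k • a) = k * ℓ a := by
      intro k a
      rcases Nat.eq_zero_or_pos k with hk | hk
      · simp [hk, hzero]
      · have hmk : Tendsto (fun m : ℕ => m * k) atTop atTop := by
          refine tendsto_atTop_atTop.2 fun b => ⟨b, fun m hm => ?_⟩
          calc b ≤ m := hm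
            _ ≤ m * k := Nat.le_mul_of_pos_right m hk
        have h1 : Tendsto (fun m : ℕ => dist (((m * k) • a) +ᵥ x₀) x₀ / (↑(m * k)) * k)
            atTop (𝓝 (ℓ a * k)) := (((htend0 a).comp hmk).mul_const _)
        have h2 : Tendsto (fun m : ℕ => dist ((m • (k • a)) +ᵥ x₀) x₀ / m)
            atTop (𝓝 (ℓ a * k)) := by
          refine h1.congr' ?_
          filter_upwards [eventually_ge_atTop 1] with m hm
          have hm0 : (m:ℝ) ≠ 0 := by positivity
          have hk0 : (k:ℝ) ≠ 0 := by positivity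
          rw [← smul_smul, Nat.cast_mul]
          field_simp
        rw [tendsto_nhds_unique (htend0 (k • a)) h2, mul_comm]
    -- ℓ is continuous
    have hlip : ∀ a b : E, |ℓ a - ℓ b| ≤ dist ((a - b) +ᵥ x₀) x₀ := by
      intro a b
      have hab : ℓ a ≤ ℓ b + ℓ (a - b) := by
        have := haddle b (a - b)
        rwa [add_sub_cancel] at this
      have hba : ℓ b ≤ ℓ a + ℓ (a - b) := by
        have h := haddle a (b - a)
        rw [add_sub_cancel] at h
        have : ℓ (b - a) = ℓ (a - b) := by rw [← neg_sub a b, hneg]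
        linarith
      have hub := hle1 (a - b)
      rw [abs_sub_le_iff]
      constructor <;> linarith
    have hcl : Continuous ℓ := by
      rw [continuous_iff_continuousAt]
      intro b
      have hg : Tendsto (fun a : E => dist ((a - b) +ᵥ x₀) x₀) (𝓝 b) (𝓝 0) := by
        have hgc : Continuous (fun a : E => dist ((a - b) +ᵥ x₀) x₀) :=
          ((hcont x₀).comp (continuous_id.sub continuous_const)).dist continuous_const
        have : dist (((b : E) - b) +ᵥ x₀) x₀ = 0 := by simp
        simpa [this] using hgc.tendsto b
      have : Tendsto (fun a : E => dist (ℓ a) (ℓ b)) (𝓝 b) (𝓝 0) := by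
        refine squeeze_zero (fun a => dist_nonneg) (fun a => ?_) hg
        rw [Real.dist_eq]
        exact hlip a b
      exact tendsto_iff_dist_tendsto_zero.2 this
    -- rational homogeneity (nonnegative)
    have hrat : ∀ (r : ℚ), 0 ≤ r → ∀ a : E, ℓ ((r : ℝ) • a) = (r : ℝ) * ℓ a := by
      intro r hr a
      have h2 : ((r.num.toNat : ℝ)) = ((r.num : ℤ) : ℝ) := by
        exact_mod_cast Int.toNat_of_nonneg (Rat.num_nonneg.2 hr)
      have hs : ((r.den : ℝ)) • ((r : ℝ) • a) = ((r.num.toNat : ℝ)) • a := by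
        rw [smul_smul]
        congr 1
        have h1 : ((r.den : ℚ)) * r = (r.num : ℚ) := by
          rw [mul_comm]; exact Rat.mul_den_eq_num r
        rw [h2]
        exact_mod_cast congrArg (Rat.cast (K := ℝ)) h1
      have hden : ℓ (((r.den : ℝ)) • ((r : ℝ) • a)) = (r.den : ℝ) * ℓ ((r : ℝ) • a) := by
        rw [Nat.cast_smul_eq_nsmul ℝ r.den ((r : ℝ) • a)]
        exact hnat r.den _
      have hnum : ℓ (((r.num.toNat : ℝ)) • a) = (r.num.toNat : ℝ) * ℓ a := by
        rw [Nat.cast_smul_eq_nsmul ℝ r.num.toNat a]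
        exact hnat r.num.toNat a
      have hden0 : (r.den : ℝ) ≠ 0 := by
        exact_mod_cast r.den_nz
      have key : (r.den : ℝ) * ℓ ((r : ℝ) • a) = (r.num.toNat : ℝ) * ℓ a := by
        rw [← hden, hs, hnum]
      have hr' : (r : ℝ) = (r.num.toNat : ℝ) / (r.den : ℝ) := by
        rw [h2, Rat.cast_def]
      have hfin : ℓ ((r : ℝ) • a) = ((r.num.toNat : ℝ) / (r.den : ℝ)) * ℓ a := by
        rw [div_mul_eq_mul_div, ← key, mul_comm ((r.den : ℝ)), mul_div_assoc,
          div_self hden0, mul_one]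
      rw [hfin, ← hr']
    -- real homogeneity (nonnegative)
    have hhomnn : ∀ (c : ℝ), 0 ≤ c → ∀ a : E, ℓ (c • a) = c * ℓ a := by
      intro c hc a
      obtain ⟨q, hq⟩ : ∃ q : ℕ → ℚ, ∀ k : ℕ, c < q k ∧ (q k : ℝ) < c + 1 / (k + 1) := by
        have : ∀ k : ℕ, ∃ q : ℚ, c < q ∧ (q : ℝ) < c + 1 / (k + 1) := by
          intro k
          exact exists_rat_btwn (by positivity |> lt_add_of_pos_right c)
        exact ⟨fun k => (this k).choose, fun k => (this k).choose_spec⟩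
      have hq0 : ∀ k, (0 : ℚ) ≤ q k := by
        intro k
        have := (hq k).1
        have : (0:ℝ) < (q k : ℝ) := lt_of_le_of_lt hc this
        exact_mod_cast this.le
      have hqc : Tendsto (fun k : ℕ => ((q k : ℝ))) atTop (𝓝 c) := by
        refine tendsto_of_tendsto_of_tendsto_of_le_of_le tendsto_const_nhds
          ?_ (fun k => (hq k).1.le) (fun k => (hq k).2.le)
        have := (tendsto_one_div_add_atTop_nhds_zero_nat).const_add c
        simpa using this
      have h1 : Tendsto (fun k : ℕ => ℓ ((q k : ℝ) • a)) atTop (𝓝 (ℓ (c • a))) :=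
        (hcl.tendsto _).comp (hqc.smul_const a)
      have h2 : Tendsto (fun k : ℕ => ℓ ((q k : ℝ) • a)) atTop (𝓝 (c * ℓ a)) := by
        refine (hqc.mul_const (ℓ a)).congr fun k => ?_
        rw [hrat (q k) (hq0 k) a]
      exact tendsto_nhds_unique h1 h2
    have hhom : ∀ (c : ℝ) (a : E), ℓ (c • a) = |c| * ℓ a := by
      intro c a
      rcases le_or_gt 0 c with hc | hc
      · rw [abs_of_nonneg hc]; exact hhomnn c hc a
      · rw [abs_of_neg hc, ← hhomnn (-c) (by linarith) a, neg_smul, hneg]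
    -- build the seminorm
    refine ⟨Seminorm.of ℓ haddle (fun c a => by rw [Real.norm_eq_abs]; exact hhom c a),
      fun a x => htend a x, ?_⟩
    refine ⟨{ carrier := {a : E | ℓ a = 0},
              add_mem' := ?_, zero_mem' := hzero, smul_mem' := ?_ }, ?_⟩
    · intro a b ha hb
      change ℓ a = 0 at ha
      change ℓ b = 0 at hb
      change ℓ (a + b) = 0
      have h1 := haddle a b
      have h2 := hnonneg (a + b)
      rw [ha, hb] at h1
      linarith
    · intro c a ha
      change ℓ a = 0 at ha
      change ℓ (c • a) = 0
      rw [hhom c a, ha, mul_zero]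
    · ext a
      simp only [Submodule.coe_set_mk, Set.mem_setOf_eq]
      constructor
      · intro ha x
        have := htend a x
        rwa [ha] at this
      · intro h
        exact tendsto_nhds_unique (htend a x₀) (h x₀)
  · refine ⟨0, fun a x => absurd ⟨x⟩ hX, ⊤, ?_⟩
    ext a
    simp only [Submodule.top_coe, Set.mem_univ, Set.mem_setOf_eq, true_iff]
    intro x
    exact absurd ⟨x⟩ hX
end
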